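/- For every A ⊆ I_n and every pair of distinct elements i, j ∈ I_n \ A, the relation Σ_{C ⊆ A, D ⊆ A} (u(C∪{j}) + u(C∪{i,j}))·u(D∪{i}) = Σ_{C ⊆ A, D ⊆ A} (u(D∪{i}) + u(D∪{i,j}))·u(C∪{j}) holds in Q_n. -/

import Mathlib

/-- Index type for the generators `z_{A,i}` of `Qₙ`: pairs `(A, i)` with
`A ⊆ Iₙ` and `i ∉ A`. -/
abbrev QIdx (n : ℕ) := {p : Finset (Fin n) × Fin n // p.2 ∉ p.1}

/-- The defining relations of the algebra `Qₙ`: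
additive relations `z_{A∪{i},j} + z_{A,i} = z_{A∪{j},i} + z_{A,j}` and
multiplicative relations `z_{A∪{i},j} · z_{A,i} = z_{A∪{j},i} · z_{A,j}`. -/
inductive QnRel (K : Type*) [Field K] (n : ℕ) :
    FreeAlgebra K (QIdx n) → FreeAlgebra K (QIdx n) → Prop
  | add (A : Finset (Fin n)) (i j : Fin n) (hi : i ∉ A) (hj : j ∉ A) (hij : i ≠ j) :
      QnRel K n
        (FreeAlgebra.ι K (⟨(insert i A, j), by simp [Finset.mem_insert, hij.symm, hj]⟩ : QIdx n)
          + FreeAlgebra.ι K (⟨(A, i), hi⟩ : QIdx n))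
        (FreeAlgebra.ι K (⟨(insert j A, i), by simp [Finset.mem_insert, hij, hi]⟩ : QIdx n)
          + FreeAlgebra.ι K (⟨(A, j), hj⟩ : QIdx n))
  | mul (A : Finset (Fin n)) (i j : Fin n) (hi : i ∉ A) (hj : j ∉ A) (hij : i ≠ j) :
      QnRel K n
        (FreeAlgebra.ι K (⟨(insert i A, j), by simp [Finset.mem_insert, hij.symm, hj]⟩ : QIdx n)
          * FreeAlgebra.ι K (⟨(A, i), hi⟩ : QIdx n))
        (FreeAlgebra.ι K (⟨(insert j A, i), by simp [Finset.mem_insert, hij, hi]⟩ : QIdx n)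
          * FreeAlgebra.ι K (⟨(A, j), hj⟩ : QIdx n))

/-- The algebra `Qₙ`: the quotient of the free associative unital `K`-algebra on the
generators `z_{A,i}` by the two-sided ideal generated by the defining relations. -/
abbrev Qn (K : Type*) [Field K] (n : ℕ) := RingQuot (QnRel K n)

/-- The image `z_{A,i}` of a generator in `Qₙ` (junk value `0` if `i ∈ A`). -/
noncomputable def zQ (K : Type*) [Field K] (n : ℕ) (A : Finset (Fin n)) (i : Fin n) : Qn K n :=
  if h : i ∉ A then RingQuot.mkAlgHom K (QnRel K n) (FreeAlgebra.ι K (⟨(A, i), h⟩ : QIdx n))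
  else 0

/-- The element `u(A) = Σ_{D ⊆ A \ {i}} (−1)^{|A|−|D|} z_{D,i}` for the choice `i = min A`
(for nonempty `A`), with `u(∅) = 1`. -/
noncomputable def uQ (K : Type*) [Field K] (n : ℕ) (A : Finset (Fin n)) : Qn K n :=
  if h : A.Nonempty then
    ∑ D ∈ (A.erase (A.min' h)).powerset,
      (-1 : Qn K n) ^ (A.card - D.card) * zQ K n D (A.min' h)
  else 1

/-- The relations defining `Q(F)`: each `u(A)` with nonempty `A ∉ F` is set to `0`. -/
inductive QcRel (K : Type*) [Field K] (n : ℕ) (F : Set (Finset (Fin n))) :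
    Qn K n → Qn K n → Prop
  | rel (A : Finset (Fin n)) (hA : A.Nonempty) (hAF : A ∉ F) : QcRel K n F (uQ K n A) 0

/-- The algebra `Q(F)`: the quotient of `Qₙ` by the two-sided ideal generated by all
`u(A)` with nonempty `A ∉ F`. -/
abbrev Qc (K : Type*) [Field K] (n : ℕ) (F : Set (Finset (Fin n))) := RingQuot (QcRel K n F)

/-- The image of `u(A)` in `Q(F)`. -/
noncomputable def uc (K : Type*) [Field K] (n : ℕ) (F : Set (Finset (Fin n)))
    (A : Finset (Fin n)) : Qc K n F :=
  RingQuot.mkAlgHom K (QcRel K n F) (uQ K n A)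

namespace RelFour
open Finset

lemma ring_aux1 {R : Type*} [Ring R] (x y : R) (e : ℕ) :
    (-1 : R) ^ e * (-1) * x + (-1 : R) ^ e * y = (-1 : R) ^ e * (y - x) := by
  noncomm_ring

lemma ring_aux2 {R : Type*} [Ring R] (x : R) (k : ℕ) :
    (-1 : R) ^ (k + 1) * x = -((-1 : R) ^ k * x) := by
  noncomm_ring

lemma ring_aux3 {R : Type*} [Ring R] (a b q : R) :
    (-b + (a - (q + a - b))) * -a = q * a := by
  noncomm_ring

lemma ring_aux4 {R : Type*} [Ring R] (a b q : R) :
    (q + a - b) * b = (-a + (a - (q + a - b))) * -b := by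
  noncomm_ring

variable {K : Type*} [Field K] {n : ℕ}

/-- `u(B)` computed with an arbitrary choice of index `i`. -/
noncomputable def uAux (K : Type*) [Field K] (n : ℕ) (B : Finset (Fin n)) (i : Fin n) :
    Qn K n :=
  ∑ D ∈ (B.erase i).powerset, (-1 : Qn K n) ^ (B.card - D.card) * zQ K n D i

lemma zrel_add (A : Finset (Fin n)) (i j : Fin n) (hi : i ∉ A) (hj : j ∉ A) (hij : i ≠ j) :
    zQ K n (insert i A) j + zQ K n A i = zQ K n (insert j A) i + zQ K n A j := by
  have h1 : j ∉ insert i A := by simp [Finset.mem_insert, hij.symm, hj]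
  have h2 : i ∉ insert j A := by simp [Finset.mem_insert, hij, hi]
  simp only [zQ, dif_pos h1, dif_pos hi, dif_pos h2, dif_pos hj]
  rw [← map_add, ← map_add]
  exact RingQuot.mkAlgHom_rel K (QnRel.add A i j hi hj hij)

lemma zrel_mul (A : Finset (Fin n)) (i j : Fin n) (hi : i ∉ A) (hj : j ∉ A) (hij : i ≠ j) :
    zQ K n (insert i A) j * zQ K n A i = zQ K n (insert j A) i * zQ K n A j := by
  have h1 : j ∉ insert i A := by simp [Finset.mem_insert, hij.symm, hj]
  have h2 : i ∉ insert j A := by simp [Finset.mem_insert, hij, hi]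
  simp only [zQ, dif_pos h1, dif_pos hi, dif_pos h2, dif_pos hj]
  rw [← map_mul, ← map_mul]
  exact RingQuot.mkAlgHom_rel K (QnRel.mul A i j hi hj hij)

lemma zrel_sub (E : Finset (Fin n)) (i j : Fin n) (hi : i ∉ E) (hj : j ∉ E) (hij : i ≠ j) :
    zQ K n (insert j E) i - zQ K n E i = zQ K n (insert i E) j - zQ K n E j := by
  have h := zrel_add (K := K) E i j hi hj hij
  rw [sub_eq_sub_iff_add_eq_add]
  exact h.symm

/-- `u(B)` does not depend on the chosen index. -/
lemma uAux_indep (B : Finset (Fin n)) (i j : Fin n) (hi : i ∈ B) (hj : j ∈ B) :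
    uAux K n B i = uAux K n B j := by
  rcases eq_or_ne i j with rfl | hij
  · rfl
  set S := (B.erase i).erase j with hS
  have hjS : j ∉ S := notMem_erase _ _
  have hiS : i ∉ S := by simp [hS]
  have h1 : insert j S = B.erase i := by
    rw [hS, insert_erase (mem_erase.mpr ⟨hij.symm, hj⟩)]
  have h2 : insert i S = B.erase j := by
    rw [hS, Finset.erase_right_comm, insert_erase (mem_erase.mpr ⟨hij, hi⟩)]
  unfold uAux
  rw [← h1, ← h2, sum_powerset_insert hjS, sum_powerset_insert hiS,
    ← sum_add_distrib, ← sum_add_distrib]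
  refine sum_congr rfl fun E hE => ?_
  rw [mem_powerset] at hE
  have hjE : j ∉ E := fun h => hjS (hE h)
  have hiE : i ∉ E := fun h => hiS (hE h)
  have hcard : E.card < B.card :=
    lt_of_le_of_lt (card_le_card (hE.trans (erase_subset _ _)))
      (card_erase_lt_of_mem hi)
  obtain ⟨e, he⟩ : ∃ e, B.card - E.card = e + 1 := ⟨B.card - E.card - 1, by omega⟩
  have he2 : B.card - (E.card + 1) = e := by omega
  rw [card_insert_of_notMem hjE, card_insert_of_notMem hiE, he, he2, pow_succ]
  have hcomb : ∀ x y : Qn K n,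
      (-1 : Qn K n) ^ e * (-1) * x + (-1 : Qn K n) ^ e * y = (-1 : Qn K n) ^ e * (y - x) :=
    fun x y => ring_aux1 x y e
  rw [hcomb, hcomb, zrel_sub E i j hiE hjE hij]

/-- Möbius inversion over powersets. -/
lemma moebius {R : Type*} [Ring R] (B : Finset (Fin n)) (g : Finset (Fin n) → R) :
    ∑ C ∈ B.powerset, ∑ D ∈ C.powerset, (-1 : R) ^ (C.card - D.card) * g D = g B := by
  induction B using Finset.induction_on generalizing g with
  | empty => simp
  | @insert a s ha ih =>
    rw [sum_powerset_insert ha]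
    have inner : ∀ C ∈ s.powerset,
        (∑ D ∈ (insert a C).powerset, (-1 : R) ^ ((insert a C).card - D.card) * g D)
          = -(∑ D ∈ C.powerset, (-1 : R) ^ (C.card - D.card) * g D)
            + ∑ D ∈ C.powerset, (-1 : R) ^ (C.card - D.card) * g (insert a D) := by
      intro C hC
      rw [mem_powerset] at hC
      have haC : a ∉ C := fun h => ha (hC h)
      rw [sum_powerset_insert haC, card_insert_of_notMem haC]
      congr 1
      · rw [← Finset.sum_neg_distrib]
        refine sum_congr rfl fun D hD => ?_
        rw [mem_powerset] at hD
        have hle := card_le_card hD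
        have hx : C.card + 1 - D.card = (C.card - D.card) + 1 := by omega
        rw [hx]
        exact ring_aux2 (g D) (C.card - D.card)
      · refine sum_congr rfl fun D hD => ?_
        rw [mem_powerset] at hD
        have haD : a ∉ D := fun h => haC (hD h)
        have hx : C.card + 1 - (insert a D).card = C.card - D.card := by
          rw [card_insert_of_notMem haD]; omega
        rw [hx]
    rw [sum_congr rfl inner, sum_add_distrib, Finset.sum_neg_distrib,
      ih (fun D => g (insert a D))]
    abel

lemma sum_uAux (B : Finset (Fin n)) (i : Fin n) (hi : i ∉ B) :
    ∑ C ∈ B.powerset, uAux K n (insert i C) i = - zQ K n B i := by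
  have key : ∀ C ∈ B.powerset, uAux K n (insert i C) i
      = -(∑ D ∈ C.powerset, (-1 : Qn K n) ^ (C.card - D.card) * zQ K n D i) := by
    intro C hC
    rw [mem_powerset] at hC
    have hiC : i ∉ C := fun h => hi (hC h)
    unfold uAux
    rw [Finset.erase_insert hiC, card_insert_of_notMem hiC, ← Finset.sum_neg_distrib]
    refine sum_congr rfl fun D hD => ?_
    rw [mem_powerset] at hD
    have hle := card_le_card hD
    have hx : C.card + 1 - D.card = (C.card - D.card) + 1 := by omega
    rw [hx]
    exact ring_aux2 (zQ K n D i) (C.card - D.card)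
  rw [sum_congr rfl key, Finset.sum_neg_distrib, moebius]

lemma sum_uAux_two (B : Finset (Fin n)) (i j : Fin n) (hi : i ∉ B) (hj : j ∉ B)
    (hij : i ≠ j) :
    ∑ C ∈ B.powerset, uAux K n (insert i (insert j C)) i
      = zQ K n B i - zQ K n (insert j B) i := by
  have hiB : i ∉ insert j B := by simp [Finset.mem_insert, hij, hi]
  have h := sum_uAux (K := K) (insert j B) i hiB
  rw [sum_powerset_insert hj, sum_uAux B i hi] at h
  have h2 := eq_sub_of_add_eq' h
  rw [h2]
  abel

lemma uQ_eq (A : Finset (Fin n)) (h : A.Nonempty) (i : Fin n) (hi : i ∈ A) :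
    uQ K n A = uAux K n A i := by
  unfold uQ
  rw [dif_pos h]
  exact uAux_indep A (A.min' h) i (A.min'_mem h) hi

end RelFour

/-- Relation (4_{A,i,j}):
`Σ_{C,D⊆A} (u(C∪{j}) + u(C∪{i,j}))·u(D∪{i}) = Σ_{C,D⊆A} (u(D∪{i}) + u(D∪{i,j}))·u(C∪{j})`
holds in `Qₙ`. -/
theorem relation_four (K : Type*) [Field K] (n : ℕ)
    (A : Finset (Fin n)) (i j : Fin n) (hi : i ∉ A) (hj : j ∉ A) (hij : i ≠ j) :
    ∑ C ∈ A.powerset, ∑ D ∈ A.powerset,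
        (uQ K n (insert j C) + uQ K n (insert i (insert j C))) * uQ K n (insert i D) =
      ∑ C ∈ A.powerset, ∑ D ∈ A.powerset,
        (uQ K n (insert i D) + uQ K n (insert i (insert j D))) * uQ K n (insert j C) := by
  classical
  rw [← Finset.sum_mul_sum, Finset.sum_comm, ← Finset.sum_mul_sum,
    Finset.sum_add_distrib, Finset.sum_add_distrib]
  have hX : ∑ C ∈ A.powerset, uQ K n (insert j C) = - zQ K n A j := by
    rw [Finset.sum_congr rfl fun C hC =>
      RelFour.uQ_eq (insert j C) ⟨j, Finset.mem_insert_self j C⟩ j (Finset.mem_insert_self j C)]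
    exact RelFour.sum_uAux A j hj
  have hY : ∑ D ∈ A.powerset, uQ K n (insert i D) = - zQ K n A i := by
    rw [Finset.sum_congr rfl fun D hD =>
      RelFour.uQ_eq (insert i D) ⟨i, Finset.mem_insert_self i D⟩ i (Finset.mem_insert_self i D)]
    exact RelFour.sum_uAux A i hi
  have hZi : ∑ C ∈ A.powerset, uQ K n (insert i (insert j C))
      = zQ K n A i - zQ K n (insert j A) i := by
    rw [Finset.sum_congr rfl fun C hC =>
      RelFour.uQ_eq (insert i (insert j C)) ⟨i, Finset.mem_insert_self i _⟩ i
        (Finset.mem_insert_self i _)]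
    exact RelFour.sum_uAux_two A i j hi hj hij
  rw [hX, hY, hZi]
  have hadd := RelFour.zrel_add (K := K) A i j hi hj hij
  have hmul := RelFour.zrel_mul (K := K) A i j hi hj hij
  have hp : zQ K n (insert j A) i = zQ K n (insert i A) j + zQ K n A i - zQ K n A j := by
    rw [eq_sub_iff_add_eq]; exact hadd.symm
  rw [hp] at hmul ⊢
  exact (RelFour.ring_aux3 (zQ K n A i) (zQ K n A j) (zQ K n (insert i A) j)).trans
    (hmul.trans (RelFour.ring_aux4 (zQ K n A i) (zQ K n A j) (zQ K n (insert i A) j)))
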